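/- Let V, V' be nonempty finite sets of integers with |V'| ≥ β² · |V| for some β > 0, let x, xᵉ : V → ℝ and x', xᵉ' : V' → ℝ, and let γ, B, H ≥ 0. Assume: (i) sqrt( Σ_{v ∈ V ∩ V'} (x'_v − xᵉ_v)² ) ≤ γ · d(x, xᵉ); (ii) d(xᵉ', xᵉ) ≤ sqrt(|V'|) · B; (iii) sqrt( Σ_{v ∈ V' \ V} (x'_v − xᵉ'_v)² ) ≤ sqrt(|V'|) · H. Then d(x', xᵉ')/sqrt(|V'|) ≤ (γ/β) · d(x, xᵉ)/sqrt(|V|) + B + H. -/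
import Mathlib


open Finset

/-- The open distance between two vectors `x : V₁ → ℝ` and `y : V₂ → ℝ`
(encoded as functions `ℤ → ℝ` together with their index sets `V₁, V₂`). -/
noncomputable def openDist (V₁ V₂ : Finset ℤ) (x y : ℤ → ℝ) : ℝ :=
  Real.sqrt ((∑ v ∈ V₁ ∩ V₂, (x v - y v) ^ 2) +
    (∑ v ∈ V₁ \ V₂, (x v) ^ 2) + (∑ v ∈ V₂ \ V₁, (y v) ^ 2))

/-- ℓ² triangle inequality for finite sums. -/
lemma sqrt_sum_sq_add_le (s : Finset ℤ) (f g : ℤ → ℝ) :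
    Real.sqrt (∑ v ∈ s, (f v + g v) ^ 2) ≤
      Real.sqrt (∑ v ∈ s, f v ^ 2) + Real.sqrt (∑ v ∈ s, g v ^ 2) := by
  have hF : (0:ℝ) ≤ ∑ v ∈ s, f v ^ 2 := Finset.sum_nonneg fun _ _ => sq_nonneg _
  have hG : (0:ℝ) ≤ ∑ v ∈ s, g v ^ 2 := Finset.sum_nonneg fun _ _ => sq_nonneg _
  have cs := Real.sum_mul_le_sqrt_mul_sqrt s f g
  have h : ∑ v ∈ s, (f v + g v) ^ 2 ≤
      (Real.sqrt (∑ v ∈ s, f v ^ 2) + Real.sqrt (∑ v ∈ s, g v ^ 2)) ^ 2 := by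
    have e : ∑ v ∈ s, (f v + g v) ^ 2 =
        (∑ v ∈ s, f v ^ 2) + (∑ v ∈ s, g v ^ 2) + 2 * ∑ v ∈ s, f v * g v := by
      rw [Finset.mul_sum, ← Finset.sum_add_distrib, ← Finset.sum_add_distrib]
      exact Finset.sum_congr rfl fun v _ => by ring
    rw [e, add_sq, Real.sq_sqrt hF, Real.sq_sqrt hG]
    nlinarith [cs]
  calc Real.sqrt (∑ v ∈ s, (f v + g v) ^ 2) ≤
      Real.sqrt ((Real.sqrt (∑ v ∈ s, f v ^ 2) + Real.sqrt (∑ v ∈ s, g v ^ 2)) ^ 2) :=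
        Real.sqrt_le_sqrt h
    _ = _ := Real.sqrt_sq (by positivity)

/-- One-step normalized estimate for open multi-agent systems. -/
theorem openDist_one_step_normalized_bound (V V' : Finset ℤ)
    (hV : V.Nonempty) (hV' : V'.Nonempty) (β : ℝ) (hβ : 0 < β)
    (hcard : ((V' : Finset ℤ).card : ℝ) ≥ β ^ 2 * ((V : Finset ℤ).card : ℝ))
    (x xe x' xe' : ℤ → ℝ) (γ B H : ℝ)
    (hγ : 0 ≤ γ) (hB : 0 ≤ B) (hH : 0 ≤ H)
    (hcontr : Real.sqrt (∑ v ∈ V ∩ V', (x' v - xe v) ^ 2) ≤ γ * openDist V V x xe)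
    (hvar : openDist V' V xe' xe ≤ Real.sqrt ((V' : Finset ℤ).card) * B)
    (hjoin : Real.sqrt (∑ v ∈ V' \ V, (x' v - xe' v) ^ 2) ≤
      Real.sqrt ((V' : Finset ℤ).card) * H) :
    openDist V' V' x' xe' / Real.sqrt ((V' : Finset ℤ).card) ≤
      (γ / β) * (openDist V V x xe / Real.sqrt ((V : Finset ℤ).card)) + B + H := by
  set D := openDist V V x xe with hD
  have hDnn : 0 ≤ D := Real.sqrt_nonneg _
  have hsV : (0:ℝ) < Real.sqrt V.card := by
    have : (0:ℝ) < V.card := by exact_mod_cast Finset.card_pos.mpr hV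
    positivity
  have hsV' : (0:ℝ) < Real.sqrt V'.card := by
    have : (0:ℝ) < V'.card := by exact_mod_cast Finset.card_pos.mpr hV'
    positivity
  -- key bound on the un-normalized distance
  have hsplit : openDist V' V' x' xe' ≤
      γ * D + Real.sqrt V'.card * B + Real.sqrt V'.card * H := by
    have e1 : openDist V' V' x' xe' =
        Real.sqrt (∑ v ∈ V', (x' v - xe' v) ^ 2) := by
      simp [openDist]
    have esum : ∑ v ∈ V', (x' v - xe' v) ^ 2 =
        (∑ v ∈ V' ∩ V, (x' v - xe' v) ^ 2) + ∑ v ∈ V' \ V, (x' v - xe' v) ^ 2 :=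
      (Finset.sum_inter_add_sum_sdiff V' V _).symm
    have h2 : Real.sqrt (∑ v ∈ V', (x' v - xe' v) ^ 2) ≤
        Real.sqrt (∑ v ∈ V' ∩ V, (x' v - xe' v) ^ 2) +
          Real.sqrt (∑ v ∈ V' \ V, (x' v - xe' v) ^ 2) := by
      rw [esum]
      set a := ∑ v ∈ V' ∩ V, (x' v - xe' v) ^ 2 with ha
      set b := ∑ v ∈ V' \ V, (x' v - xe' v) ^ 2 with hb
      have han : 0 ≤ a := Finset.sum_nonneg fun _ _ => sq_nonneg _
      have hbn : 0 ≤ b := Finset.sum_nonneg fun _ _ => sq_nonneg _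
      have h : a + b ≤ (Real.sqrt a + Real.sqrt b) ^ 2 := by
        rw [add_sq, Real.sq_sqrt han, Real.sq_sqrt hbn]
        nlinarith [Real.sqrt_nonneg a, Real.sqrt_nonneg b]
      calc Real.sqrt (a + b) ≤ Real.sqrt ((Real.sqrt a + Real.sqrt b) ^ 2) :=
            Real.sqrt_le_sqrt h
        _ = _ := Real.sqrt_sq (by positivity)
    have h3 : Real.sqrt (∑ v ∈ V' ∩ V, (x' v - xe' v) ^ 2) ≤
        γ * D + Real.sqrt V'.card * B := by
      have tri : Real.sqrt (∑ v ∈ V' ∩ V, (x' v - xe' v) ^ 2) ≤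
          Real.sqrt (∑ v ∈ V' ∩ V, (x' v - xe v) ^ 2) +
            Real.sqrt (∑ v ∈ V' ∩ V, (xe v - xe' v) ^ 2) := by
        have := sqrt_sum_sq_add_le (V' ∩ V) (fun v => x' v - xe v)
          (fun v => xe v - xe' v)
        simpa using this
      have hA : Real.sqrt (∑ v ∈ V' ∩ V, (x' v - xe v) ^ 2) ≤ γ * D := by
        rw [Finset.inter_comm]; exact hcontr
      have hBB : Real.sqrt (∑ v ∈ V' ∩ V, (xe v - xe' v) ^ 2) ≤
          Real.sqrt V'.card * B := by
        refine le_trans ?_ hvar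
        rw [openDist]
        apply Real.sqrt_le_sqrt
        have e : ∑ v ∈ V' ∩ V, (xe v - xe' v) ^ 2
            = ∑ v ∈ V' ∩ V, (xe' v - xe v) ^ 2 :=
          Finset.sum_congr rfl fun v _ => by ring
        rw [e]
        have n1 : (0:ℝ) ≤ ∑ v ∈ V' \ V, xe' v ^ 2 :=
          Finset.sum_nonneg fun _ _ => sq_nonneg _
        have n2 : (0:ℝ) ≤ ∑ v ∈ V \ V', xe v ^ 2 :=
          Finset.sum_nonneg fun _ _ => sq_nonneg _
        linarith
      linarith
    rw [e1]
    linarith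
  -- divide by √|V'|
  rw [div_le_iff₀ hsV']
  have hβV : β * Real.sqrt V.card ≤ Real.sqrt V'.card := by
    have : Real.sqrt (β ^ 2 * V.card) ≤ Real.sqrt V'.card :=
      Real.sqrt_le_sqrt hcard
    rwa [Real.sqrt_mul (by positivity), Real.sqrt_sq hβ.le] at this
  have hcore : γ * D ≤ (γ / β) * (D / Real.sqrt V.card) * Real.sqrt V'.card := by
    have h1 : (γ / β) * (D / Real.sqrt V.card) * (β * Real.sqrt V.card) = γ * D := by
      field_simp
    calc γ * D = (γ / β) * (D / Real.sqrt V.card) * (β * Real.sqrt V.card) := h1.symm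
      _ ≤ (γ / β) * (D / Real.sqrt V.card) * Real.sqrt V'.card := by
        apply mul_le_mul_of_nonneg_left hβV
        positivity
  calc openDist V' V' x' xe' ≤ γ * D + Real.sqrt V'.card * B + Real.sqrt V'.card * H :=
        hsplit
    _ ≤ ((γ / β) * (D / Real.sqrt V.card) + B + H) * Real.sqrt V'.card := by
        rw [add_mul, add_mul]
        have : B * Real.sqrt V'.card = Real.sqrt V'.card * B := mul_comm _ _
        nlinarith [hcore]
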